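/- If every left R-module is a direct sum of virtually simple modules, then R is a semisimple ring. -/

import Mathlib

def VirtuallySimple (R : Type*) [Ring R] (M : Type*) [AddCommGroup M] [Module R M] : Prop :=
  Nontrivial M ∧ ∀ N : Submodule R M, N ≠ ⊥ → Nonempty (N ≃ₗ[R] M)

section Aux
variable {R M M' : Type*} [Ring R] [AddCommGroup M] [Module R M]
  [AddCommGroup M'] [Module R M']

theorem VirtuallySimple.congr (hM : VirtuallySimple R M) (e : M ≃ₗ[R] M') :
    VirtuallySimple R M' := by
  obtain ⟨hnt, hiso⟩ := hM
  haveI := hnt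
  refine ⟨e.symm.toEquiv.nontrivial, fun N' hN' => ?_⟩
  obtain ⟨x, hxN, hx0⟩ := (Submodule.ne_bot_iff N').mp hN'
  have hN : Submodule.map (e.symm : M' →ₗ[R] M) N' ≠ ⊥ :=
    (Submodule.ne_bot_iff _).mpr ⟨e.symm x, Submodule.mem_map_of_mem hxN,
      by simpa using hx0⟩
  obtain ⟨e2⟩ := hiso _ hN
  exact ⟨((e.symm.submoduleMap N').trans e2).trans e⟩

theorem VirtuallySimple.isNoetherian (hM : VirtuallySimple R M) : IsNoetherian R M := by
  obtain ⟨hnt, hiso⟩ := hM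
  haveI := hnt
  obtain ⟨x, hx0⟩ := exists_ne (0 : M)
  have hx : (Submodule.span R {x}) ≠ ⊥ := by
    simpa [Submodule.span_singleton_eq_bot] using hx0
  obtain ⟨e⟩ := hiso _ hx
  haveI : Module.Finite R ↥(Submodule.span R {x}) :=
    Module.Finite.iff_fg.mpr (Submodule.fg_span_singleton x)
  haveI : Module.Finite R M := Module.Finite.equiv e
  rw [isNoetherian_def]
  intro N
  by_cases hN : N = ⊥
  · simpa [hN] using Submodule.fg_bot
  · obtain ⟨e'⟩ := hiso N hN
    haveI : Module.Finite R ↥N := Module.Finite.equiv e'.symm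
    exact Module.Finite.iff_fg.mp this
end Aux
section Unif
variable {R M : Type*} [Ring R] [AddCommGroup M] [Module R M]

theorem VirtuallySimple.inf_ne_bot (hM : VirtuallySimple R M) {A B : Submodule R M}
    (hA : A ≠ ⊥) (hB : B ≠ ⊥) : A ⊓ B ≠ ⊥ := by
  intro hAB
  obtain ⟨e⟩ := hM.2 A hA
  set g : Module.End R M := A.subtype.comp (e.symm : M →ₗ[R] ↥A) with hg
  have hginj : Function.Injective g := A.injective_subtype.comp e.symm.injective
  have hgrange : LinearMap.range (g : M →ₗ[R] M) = A := by
    rw [hg, LinearMap.range_comp, LinearEquiv.range, Submodule.map_top,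
      Submodule.range_subtype]
  have hpowinj : ∀ n : ℕ, Function.Injective (g ^ n : Module.End R M) :=
    Module.End.iterate_injective hginj
  -- the basic inclusion: map g X ≤ A
  have hmapg : ∀ X : Submodule R M, Submodule.map (g : M →ₗ[R] M) X ≤ A := by
    rintro X x ⟨y, -, rfl⟩
    rw [← hgrange]
    exact LinearMap.mem_range_self _ y
  have hpow_succ : ∀ (n : ℕ) (X : Submodule R M),
      Submodule.map ((g ^ (n+1) : Module.End R M) : M →ₗ[R] M) X
        = Submodule.map ((g ^ n : Module.End R M) : M →ₗ[R] M)
            (Submodule.map (g : M →ₗ[R] M) X) := by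
    intro n X
    rw [pow_succ, Module.End.mul_eq_comp, Submodule.map_comp]
  have hAle : ∀ n : ℕ, ∀ X : Submodule R M,
      Submodule.map ((g ^ (n+1) : Module.End R M) : M →ₗ[R] M) X
        ≤ Submodule.map ((g ^ n : Module.End R M) : M →ₗ[R] M) A := by
    intro n X
    rw [hpow_succ]
    exact Submodule.map_mono (hmapg X)
  -- the chain
  set C : ℕ → Submodule R M := fun n => Nat.rec B
    (fun n Cn => Cn ⊔ Submodule.map ((g ^ (n+1) : Module.End R M) : M →ₗ[R] M) B) n with hC
  have hCsucc : ∀ n, C (n+1) = C n ⊔ Submodule.map ((g ^ (n+1) : Module.End R M) : M →ₗ[R] M) B :=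
    fun n => rfl
  have claim1 : ∀ n, C n ⊓ Submodule.map ((g ^ n : Module.End R M) : M →ₗ[R] M) A = ⊥ := by
    intro n
    induction n with
    | zero =>
      have hBA : B ⊓ A = ⊥ := by rw [inf_comm]; exact hAB
      show B ⊓ Submodule.map ((g ^ 0 : Module.End R M) : M →ₗ[R] M) A = ⊥
      rw [pow_zero, Module.End.one_eq_id, Submodule.map_id]
      exact hBA
    | succ n ih =>
      rw [Submodule.eq_bot_iff]
      intro x hx
      rw [hCsucc, Submodule.mem_inf] at hx
      obtain ⟨hxC, hxA⟩ := hx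
      rw [Submodule.mem_sup] at hxC
      obtain ⟨c, hc, b, hb, rfl⟩ := hxC
      have hbA : b ∈ Submodule.map ((g ^ n : Module.End R M) : M →ₗ[R] M) A := hAle n B hb
      have hxA' : c + b ∈ Submodule.map ((g ^ n : Module.End R M) : M →ₗ[R] M) A :=
        hAle n A hxA
      have hcA : c ∈ Submodule.map ((g ^ n : Module.End R M) : M →ₗ[R] M) A := by
        have : c = (c + b) - b := by abel
        rw [this]
        exact Submodule.sub_mem _ hxA' hbA
      have hc0 : c = 0 := by
        have := ih ▸ (Submodule.mem_inf.mpr ⟨hc, hcA⟩ : c ∈ _)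
        simpa using this
      subst hc0
      simp only [zero_add] at hxA ⊢
      have : b ∈ Submodule.map ((g ^ (n+1) : Module.End R M) : M →ₗ[R] M) (B ⊓ A) := by
        rw [Submodule.map_inf _ (hpowinj (n+1))]
        exact Submodule.mem_inf.mpr ⟨hb, hxA⟩
      rw [inf_comm, hAB, Submodule.map_bot] at this
      simpa using this
  have hmono : Monotone C := by
    apply monotone_nat_of_le_succ
    intro n
    rw [hCsucc]
    exact le_sup_left
  have hstrict : ∀ n, C n ≠ C (n+1) := by
    intro n hEq
    obtain ⟨y, hyB, hy0⟩ := (Submodule.ne_bot_iff B).mp hB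
    have hyne : (g ^ (n+1) : Module.End R M) y ≠ 0 := fun h0 => hy0 (hpowinj (n+1) (by simpa using h0))
    have hymem : (g ^ (n+1) : Module.End R M) y ∈ C (n+1) := by
      rw [hCsucc]
      exact Submodule.mem_sup_right (Submodule.mem_map_of_mem hyB)
    rw [← hEq] at hymem
    have hyA : (g ^ (n+1) : Module.End R M) y
        ∈ Submodule.map ((g ^ n : Module.End R M) : M →ₗ[R] M) A := by
      exact hAle n B (Submodule.mem_map_of_mem hyB)
    have := claim1 n ▸ (Submodule.mem_inf.mpr ⟨hymem, hyA⟩ : _)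
    exact hyne (by simpa using this)
  have hnoeth := hM.isNoetherian
  obtain ⟨n, hn⟩ := monotone_stabilizes_iff_noetherian.mpr hnoeth ⟨C, hmono⟩
  have hnm := hn (n+1) (Nat.le_succ n)
  simp only [OrderHom.coe_mk] at hnm
  exact hstrict n hnm
end Unif
section Key
universe u
variable {R : Type u} [Ring R]

theorem vs_simple
    (h : ∀ (M : Type u) [AddCommGroup M] [Module R M],
      ∃ (ι : Type u) (V : ι → Submodule R M), iSupIndep V ∧ iSup V = ⊤ ∧
        ∀ i, VirtuallySimple R (V i))
    (V : Type u) [AddCommGroup V] [Module R V] (hV : VirtuallySimple R V) :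
    IsSimpleModule R V := by
  haveI := hV.1
  rw [isSimpleModule_iff]
  constructor
  intro N
  by_contra hcon
  push_neg at hcon
  obtain ⟨hN1, hN2⟩ := hcon
  obtain ⟨e⟩ := hV.2 N hN1
  set φ : Module.End R V := N.subtype.comp (e.symm : V →ₗ[R] ↥N) with hφ
  have hφinj : Function.Injective φ := N.injective_subtype.comp e.symm.injective
  have hφrange : LinearMap.range (φ : V →ₗ[R] V) = N := by
    rw [hφ, LinearMap.range_comp, LinearEquiv.range, Submodule.map_top,
      Submodule.range_subtype]
  have hpowinj : ∀ n : ℕ, Function.Injective (φ ^ n : Module.End R V) :=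
    Module.End.iterate_injective hφinj
  -- the directed system
  set G : ℕ → Type u := fun _ => V with hG
  set f : ∀ i j : ℕ, i ≤ j → G i →ₗ[R] G j :=
    fun i j _ => ((φ ^ (j - i) : Module.End R V) : V →ₗ[R] V) with hf
  haveI hDS : DirectedSystem G (fun i j h => f i j h) := by
    constructor
    · intro i x
      show ((φ ^ (i - i) : Module.End R V) : V →ₗ[R] V) x = x
      rw [Nat.sub_self, pow_zero, Module.End.one_eq_id, LinearMap.id_apply]
    · intro k j i hij hjk x
      show ((φ ^ (k - j) : Module.End R V) : V →ₗ[R] V)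
          (((φ ^ (j - i) : Module.End R V) : V →ₗ[R] V) x)
        = ((φ ^ (k - i) : Module.End R V) : V →ₗ[R] V) x
      rw [← Module.End.mul_apply, ← pow_add, tsub_add_tsub_cancel hjk hij]
  set M := Module.DirectLimit G f with hM
  set myof : ∀ n : ℕ, V →ₗ[R] M := fun n => Module.DirectLimit.of R ℕ G f n with hmyof
  have hofinj : ∀ n : ℕ, Function.Injective (myof n) := by
    intro n a b hab
    have hz : myof n (a - b) = 0 := by rw [map_sub, hab, sub_self]
    obtain ⟨j, hij, hj⟩ := Module.DirectLimit.of.zero_exact hz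
    have : ((φ ^ (j - n) : Module.End R V) : V →ₗ[R] V) (a - b) = 0 := hj
    rw [LinearMap.map_sub, sub_eq_zero] at this
    exact hpowinj (j - n) this
  have hofsucc : ∀ (n : ℕ) (x : V), myof n x = myof (n + 1) (φ x) := by
    intro n x
    have := Module.DirectLimit.of_f (R := R) (ι := ℕ) (G := G) (f := f)
      (i := n) (j := n + 1) (hij := Nat.le_succ n) (x := x)
    rw [← this]
    congr 1
    show ((φ ^ (n + 1 - n) : Module.End R V) : V →ₗ[R] V) x = φ x
    rw [Nat.add_sub_cancel_left, pow_one]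
  -- the chain of submodules
  set P : ℕ → Submodule R M := fun n => LinearMap.range (myof n) with hP
  have hPmono : Monotone P := by
    apply monotone_nat_of_le_succ
    rintro n _ ⟨x, rfl⟩
    exact ⟨φ x, (hofsucc n x).symm⟩
  have hPequiv : ∀ n, Nonempty (↥(P n) ≃ₗ[R] V) :=
    fun n => ⟨(LinearEquiv.ofInjective (myof n) (hofinj n)).symm⟩
  have hPVS : ∀ n, VirtuallySimple R ↥(P n) :=
    fun n => hV.congr (LinearEquiv.ofInjective (myof n) (hofinj n))
  obtain ⟨x₀, hx₀⟩ : ∃ x : V, x ∉ N := by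
    by_contra hall
    push_neg at hall
    exact hN2 (Submodule.eq_top_iff'.mpr hall)
  have hPstrict : ∀ n, P n ≠ P (n + 1) := by
    intro n hEq
    have hmem : myof (n + 1) x₀ ∈ P n := hEq ▸ ⟨x₀, rfl⟩
    obtain ⟨y, hy⟩ := hmem
    rw [hofsucc n y] at hy
    have : φ y = x₀ := hofinj (n + 1) hy
    exact hx₀ (hφrange ▸ ⟨y, this⟩)
  -- M is uniform
  have hMuniform : ∀ X Y : Submodule R M, X ≠ ⊥ → Y ≠ ⊥ → X ⊓ Y ≠ ⊥ := by
    intro X Y hX hY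
    obtain ⟨x, hxX, hx0⟩ := (Submodule.ne_bot_iff X).mp hX
    obtain ⟨y, hyY, hy0⟩ := (Submodule.ne_bot_iff Y).mp hY
    obtain ⟨n, a, ha⟩ := Module.DirectLimit.exists_of x
    obtain ⟨m, b, hb⟩ := Module.DirectLimit.exists_of y
    set k := max n m with hk
    have hxP : x ∈ P k := hPmono (le_max_left n m) (ha ▸ ⟨a, rfl⟩)
    have hyP : y ∈ P k := hPmono (le_max_right n m) (hb ▸ ⟨b, rfl⟩)
    set x' : ↥(P k) := ⟨x, hxP⟩ with hx'
    set y' : ↥(P k) := ⟨y, hyP⟩ with hy'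
    have hx'0 : x' ≠ 0 := fun hc => hx0 (by simpa [hx'] using congrArg Subtype.val hc)
    have hy'0 : y' ≠ 0 := fun hc => hy0 (by simpa [hy'] using congrArg Subtype.val hc)
    have hA' : Submodule.span R {x'} ≠ ⊥ := by
      simpa [Submodule.span_singleton_eq_bot] using hx'0
    have hB' : Submodule.span R {y'} ≠ ⊥ := by
      simpa [Submodule.span_singleton_eq_bot] using hy'0
    have hinf := (hPVS k).inf_ne_bot hA' hB'
    obtain ⟨z, hz, hz0⟩ := (Submodule.ne_bot_iff _).mp hinf
    obtain ⟨hzA, hzB⟩ := Submodule.mem_inf.mp hz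
    obtain ⟨r, hr⟩ := Submodule.mem_span_singleton.mp hzA
    obtain ⟨s, hs⟩ := Submodule.mem_span_singleton.mp hzB
    apply (Submodule.ne_bot_iff _).mpr
    refine ⟨(z : M), Submodule.mem_inf.mpr ⟨?_, ?_⟩, by simpa using hz0⟩
    · have : (z : M) = r • x := by rw [← hr]; rfl
      rw [this]; exact X.smul_mem r hxX
    · have : (z : M) = s • y := by rw [← hs]; rfl
      rw [this]; exact Y.smul_mem s hyY
  -- apply the hypothesis to M
  obtain ⟨ι, W, hind, hsup, hWvs⟩ := h M
  haveI : Nontrivial M := by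
    obtain ⟨v, hv0⟩ := exists_ne (0 : V)
    exact nontrivial_of_ne (myof 0 v) 0 (fun hc => hv0 (hofinj 0 (by simpa using hc)))
  rcases isEmpty_or_nonempty ι with hι | hι
  · have : (⊤ : Submodule R M) = ⊥ := by rw [← hsup, iSup_of_empty]
    exact absurd this.symm bot_ne_top
  · set i₀ := Classical.arbitrary ι with hi₀
    have hWne : ∀ j, W j ≠ ⊥ := by
      intro j hbot
      haveI := (hWvs j).1
      obtain ⟨w1, w2, hw⟩ := exists_pair_ne ↥(W j)
      apply hw
      have h1 : (w1 : M) = 0 := by simpa [hbot] using w1.2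
      have h2 : (w2 : M) = 0 := by simpa [hbot] using w2.2
      exact Subtype.ext (h1.trans h2.symm)
    have hone : ∀ j, W j ≤ W i₀ := by
      intro j
      by_cases hj : j = i₀
      · rw [hj]
      · exfalso
        have hdisj : Disjoint (W j) (⨆ k, ⨆ (_ : k ≠ j), W k) := hind j
        have hle : W i₀ ≤ ⨆ k, ⨆ (_ : k ≠ j), W k :=
          le_iSup_of_le i₀ (le_iSup_of_le (fun hc => hj hc.symm) le_rfl)
        have : W j ⊓ W i₀ = ⊥ := disjoint_iff.mp (hdisj.mono_right hle)
        exact hMuniform (W j) (W i₀) (hWne j) (hWne i₀) this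
    have htop : W i₀ = ⊤ := top_unique (hsup ▸ iSup_le hone)
    have hMVS : VirtuallySimple R M :=
      (hWvs i₀).congr ((LinearEquiv.ofEq _ _ htop).trans (Submodule.topEquiv))
    have hP0 : P 0 ≠ ⊥ := by
      obtain ⟨v, hv0⟩ := exists_ne (0 : V)
      exact (Submodule.ne_bot_iff _).mpr
        ⟨myof 0 v, ⟨v, rfl⟩, fun hc => hv0 (hofinj 0 (by simpa using hc))⟩
    obtain ⟨e2⟩ := hMVS.2 (P 0) hP0
    have e3 : V ≃ₗ[R] M := (LinearEquiv.ofInjective (myof 0) (hofinj 0)).trans e2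
    haveI : IsNoetherian R V := hV.isNoetherian
    haveI : IsNoetherian R M := isNoetherian_of_linearEquiv e3
    obtain ⟨n, hn⟩ := monotone_stabilizes_iff_noetherian.mpr this ⟨P, hPmono⟩
    have hnm := hn (n + 1) (Nat.le_succ n)
    simp only [OrderHom.coe_mk] at hnm
    exact hPstrict n hnm
end Key

/-- If every left `R`-module is a direct sum of virtually simple modules,
then `R` is a semisimple ring. -/
theorem stmt2 (R : Type u) [Ring R]
    (h : ∀ (M : Type u) [AddCommGroup M] [Module R M],
      ∃ (ι : Type u) (V : ι → Submodule R M), iSupIndep V ∧ iSup V = ⊤ ∧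
        ∀ i, VirtuallySimple R (V i)) :
    IsSemisimpleRing R := by
  obtain ⟨ι, V, hind, hsup, hVvs⟩ := h R
  have hsimple : ∀ i, IsSimpleModule R ↥(V i) := fun i => vs_simple h _ (hVvs i)
  have hss : ∀ i, IsSemisimpleModule R ↥(V i) := fun i => by
    haveI := hsimple i
    infer_instance
  exact (isSemisimpleModule_of_isSemisimpleModule_submodule' hss hsup : IsSemisimpleModule R R)
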